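/- Let R be a finite-dimensional semisimple k-algebra and A any R-algebra that is smooth over k (i.e. finitely generated with Ω¹A projective as an A-bimodule). Then A is smooth over R, i.e. Ω¹_R A is projective as an A-bimodule. -/

import Mathlib

open TensorProduct MulOpposite

/-- The multiplication map `A ⊗ Aᵒᵖ → A`, `a ⊗ bᵒᵖ ↦ a * b`.  Here `A ⊗ Aᵒᵖ` is the
`A`-bimodule `A ⊗ A` (outer structure), viewed as the left regular module over the
enveloping algebra `Aᵉ = A ⊗ Aᵒᵖ`. -/
noncomputable def muE (k A : Type*) [CommRing k] [Ring A] [Algebra k A] :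
    A ⊗[k] Aᵐᵒᵖ →ₗ[k] A :=
  (LinearMap.mul' k A).comp
    (TensorProduct.map LinearMap.id (opLinearEquiv k : A ≃ₗ[k] Aᵐᵒᵖ).symm.toLinearMap)

lemma muE_tmul (k A : Type*) [CommRing k] [Ring A] [Algebra k A] (a : A) (b : Aᵐᵒᵖ) :
    muE k A (a ⊗ₜ[k] b) = a * b.unop := by
  simp [muE]

lemma muE_mul_left (k A : Type*) [CommRing k] [Ring A] [Algebra k A]
    (c : A) (b : Aᵐᵒᵖ) (x : A ⊗[k] Aᵐᵒᵖ) :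
    muE k A ((c ⊗ₜ[k] b) * x) = c * muE k A x * b.unop := by
  induction x using TensorProduct.induction_on with
  | zero => simp
  | tmul a b' => simp [Algebra.TensorProduct.tmul_mul_tmul, muE_tmul, mul_assoc]
  | add u v hu hv => simp only [mul_add, map_add, hu, hv, add_mul]

/-- The kernel of the multiplication map `Aᵉ ≅ A ⊗ A → A`, i.e. the `A`-bimodule
`Ω¹A` of absolute noncommutative 1-forms, as a left `Aᵉ`-submodule of `Aᵉ`. -/
noncomputable def kerMu (k A : Type*) [CommRing k] [Ring A] [Algebra k A] :
    Submodule (A ⊗[k] Aᵐᵒᵖ) (A ⊗[k] Aᵐᵒᵖ) where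
  carrier := {x | muE k A x = 0}
  add_mem' := by
    intro a b ha hb
    simp only [Set.mem_setOf_eq] at *
    rw [map_add, ha, hb, add_zero]
  zero_mem' := by simp
  smul_mem' := by
    intro z x hx
    simp only [Set.mem_setOf_eq] at *
    rw [smul_eq_mul]
    induction z using TensorProduct.induction_on with
    | zero => simp
    | tmul c b => rw [muE_mul_left, hx]; simp
    | add u v hu hv => rw [add_mul, map_add, hu, hv, add_zero]

/-- The `A`-subbimodule of `A ⊗ A` generated by the relators
`f r ⊗ 1 - 1 ⊗ f r` for the `R`-balanced tensor product; the quotient of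
`ker(mult)` by it is `Ω¹_R A`. -/
noncomputable def relJ (k : Type*) {R A : Type*} [CommRing k] [Ring R] [Ring A]
    [Algebra k R] [Algebra k A] (f : R →ₐ[k] A) :
    Submodule (A ⊗[k] Aᵐᵒᵖ) (A ⊗[k] Aᵐᵒᵖ) :=
  Submodule.span _
    {x | ∃ r : R, x = f r ⊗ₜ[k] (1 : Aᵐᵒᵖ) - (1 : A) ⊗ₜ[k] op (f r)}

open LinearMap Module
set_option linter.unusedSectionVars false
section
variable (k R : Type*) [Field k] [CharZero k] [Ring R] [Algebra k R]
  [FiniteDimensional k R] [IsSemisimpleRing R]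

noncomputable def Tf : LinearMap.BilinForm k R :=
  LinearMap.compr₂ (LinearMap.mul k R) ((LinearMap.trace k R) ∘ₗ (LinearMap.mul k R))

variable {k R}

lemma Tf_apply (x y : R) : Tf k R x y = trace k R (LinearMap.mul k R (x * y)) := rfl

lemma Tf_cyc (x y z : R) : Tf k R (x * y) z = Tf k R x (y * z) := by
  simp [Tf_apply, mul_assoc]

lemma Tf_symm (x y : R) : Tf k R x y = Tf k R y x := by
  have h : ∀ a b : R, LinearMap.mul k R (a * b) =
      (LinearMap.mul k R a) * (LinearMap.mul k R b) := by
    intro a b; ext z; simp [LinearMap.mul_apply', mul_assoc]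
  rw [Tf_apply, Tf_apply, h, h, trace_mul_comm]

variable (k R) in
/-- the radical of the trace form, as a left ideal -/
noncomputable def radN : Submodule R R where
  carrier := {x | ∀ y, Tf k R x y = 0}
  add_mem' := by intro a b ha hb y; simp [map_add, ha y, hb y]
  zero_mem' := by intro y; simp
  smul_mem' := by
    intro r x hx y
    rw [smul_eq_mul, Tf_cyc, Tf_symm, Tf_cyc]
    exact hx _

lemma Tf_nondeg : (Tf k R).Nondegenerate := by
  suffices hL : ∀ x : R, (∀ y, Tf k R x y = 0) → x = 0 from
    ⟨hL, fun y hy => hL y (fun x => by rw [Tf_symm]; exact hy x)⟩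
  intro x hx
  obtain ⟨C, hC⟩ := exists_isCompl (radN k R)
  set π : R →ₗ[R] R := (radN k R).subtype ∘ₗ (Submodule.projectionOnto _ C hC) with hπ
  have hπ_left : ∀ z : R, z ∈ radN k R → π z = z := by
    intro z hz
    simp [hπ, Submodule.projectionOnto_apply_left hC ⟨z, hz⟩]
  set n : R := π 1 with hn
  have hπ_eq : ∀ z : R, π z = z * n := by
    intro z
    have : π z = π (z • (1:R)) := by rw [smul_eq_mul, mul_one]
    rw [this, map_smul, smul_eq_mul, hn]
  have hnN : n ∈ radN k R := by rw [hn, hπ]; exact ((Submodule.projectionOnto _ C hC) 1).2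
  have hidem : n * n = n := by
    have := hπ_left n hnN
    rw [hπ_eq] at this; exact this
  -- the endomorphism lmul n is idempotent
  set f : Module.End k R := LinearMap.mul k R n with hff
  have hf2 : f ∘ₗ f = f := by
    ext z; simp [hff, LinearMap.mul_apply', ← mul_assoc, hidem]
  obtain ⟨p, hp⟩ := (LinearMap.isProj_iff_isIdempotentElem f).mpr hf2
  have htr : trace k R f = (finrank k p : k) := hp.trace
  have htr0 : trace k R f = 0 := by
    have := hnN 1
    rwa [Tf_apply, mul_one] at this
  have hp0 : p = ⊥ := by
    rw [htr0] at htr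
    have : finrank k p = 0 := by exact_mod_cast htr.symm
    exact Submodule.finrank_eq_zero.mp this
  have hn0 : n = 0 := by
    have := hp.map_mem 1
    rw [hp0, Submodule.mem_bot] at this
    simpa [hff, LinearMap.mul_apply'] using this
  have := hπ_left x hx
  rw [hπ_eq, hn0, mul_zero] at this
  exact this.symm
end

open TensorProduct

section Casimir
variable (k R : Type*) [Field k] [CharZero k] [Ring R] [Algebra k R]
  [FiniteDimensional k R] [IsSemisimpleRing R]

noncomputable def bB : Basis (Fin (finrank k R)) k R := Module.finBasis k R
noncomputable def yB : Basis (Fin (finrank k R)) k R :=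
  (Tf k R).dualBasis Tf_nondeg (bB k R)

variable {k R}

lemma yB_repr (w : R) (i) : (yB k R).repr w i = Tf k R w (bB k R i) :=
  LinearMap.BilinForm.dualBasis_repr_apply _ _ w i

lemma Tf_yB_bB (i j) : Tf k R (yB k R i) (bB k R j) = if j = i then 1 else 0 :=
  LinearMap.BilinForm.apply_dualBasis_left _ _ i j

lemma Tf_bB_yB (i j) : Tf k R (bB k R i) (yB k R j) = if i = j then 1 else 0 := by
  rw [Tf_symm, Tf_yB_bB]

lemma bB_repr (z : R) (i) : (bB k R).repr z i = Tf k R z (yB k R i) := by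
  conv_rhs => rw [← (bB k R).sum_repr z]
  simp only [map_sum, LinearMap.sum_apply, map_smul, LinearMap.smul_apply, smul_eq_mul,
    Tf_bB_yB, mul_ite, mul_one, mul_zero, Finset.sum_ite_eq']
  simp

/-- the Casimir identity -/
lemma casimir (r : R) :
    ∑ i, (r * bB k R i) ⊗ₜ[k] yB k R i = ∑ i, bB k R i ⊗ₜ[k] (yB k R i * r) := by
  apply ((bB k R).tensorProduct (yB k R)).repr.injective
  ext ⟨j, i⟩
  rw [map_sum, map_sum, Finsupp.coe_finset_sum, Finsupp.coe_finset_sum]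
  simp only [Finset.sum_apply, Basis.tensorProduct_repr_tmul_apply]
  rw [Finset.sum_eq_single i, Finset.sum_eq_single j]
  · rw [Basis.repr_self, Basis.repr_self]
    simp only [Finsupp.single_eq_same, mul_one, one_mul]
    rw [bB_repr, yB_repr]
    rw [Tf_symm, Tf_cyc, one_smul, smul_eq_mul, mul_one]
  · intro m _ hm; rw [(bB k R).repr_self]; simp [Finsupp.single_eq_of_ne' hm]
  · intro h; simp at h
  · intro m _ hm; rw [(yB k R).repr_self]; simp [Finsupp.single_eq_of_ne' hm]
  · intro h; simp at h
end Casimir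

section CasEl
variable (k R : Type*) [Field k] [CharZero k] [Ring R] [Algebra k R]
  [FiniteDimensional k R] [IsSemisimpleRing R]

noncomputable def cEl : R := ∑ i, bB k R i * yB k R i

variable {k R}

lemma cEl_central (r : R) : r * cEl k R = cEl k R * r := by
  have h := congrArg (LinearMap.mul' k R) (casimir (k := k) (R := R) r)
  simp only [map_sum, LinearMap.mul'_apply] at h
  rw [cEl, Finset.mul_sum, Finset.sum_mul]
  simpa only [mul_assoc] using h

lemma Tf_cEl (a : R) : Tf k R (cEl k R) a = trace k R (LinearMap.mul k R a) := by
  rw [LinearMap.trace_eq_matrix_trace k (bB k R), Matrix.trace]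
  simp only [Matrix.diag_apply, LinearMap.toMatrix_apply]
  rw [cEl, map_sum]
  simp only [LinearMap.sum_apply]
  congr 1; ext i
  rw [bB_repr, LinearMap.mul_apply', Tf_cyc, Tf_symm, Tf_cyc, Tf_symm]

lemma cEl_nzd (x : R) (h : x * cEl k R = 0) : x = 0 := by
  apply (Tf_nondeg (k := k)).1
  intro a
  rw [Tf_apply, ← Tf_cEl, ← Tf_cyc, ← cEl_central, h]
  simp

variable (k R) in
lemma exists_inv : ∃ d : R, d * cEl k R = 1 ∧ cEl k R * d = 1 ∧ ∀ r, r * d = d * r := by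
  set ρ : R →ₗ[k] R := LinearMap.mulRight k (cEl k R) with hρ
  have hinj : Function.Injective ρ := by
    rw [← LinearMap.ker_eq_bot]
    apply (Submodule.eq_bot_iff _).mpr
    intro x hx
    exact cEl_nzd x (by simpa [hρ] using hx)
  have hsurj : Function.Surjective ρ := LinearMap.surjective_of_injective (K := k) (V := R) hinj
  obtain ⟨d, hd⟩ := hsurj 1
  simp only [hρ, LinearMap.mulRight_apply] at hd
  have hcd : cEl k R * d = 1 := by
    apply hinj
    simp only [hρ, LinearMap.mulRight_apply]
    rw [mul_assoc, hd, mul_one, one_mul]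
  refine ⟨d, hd, hcd, fun r => ?_⟩
  apply hinj
  simp only [hρ, LinearMap.mulRight_apply]
  rw [mul_assoc, hd, mul_one, mul_assoc, cEl_central, ← mul_assoc, hd, one_mul]
end CasEl

section CF
variable (k R : Type*) [Field k] [CharZero k] [Ring R] [Algebra k R]
  [FiniteDimensional k R] [IsSemisimpleRing R]

noncomputable def dEl : R := (exists_inv k R).choose

lemma dEl_spec : dEl k R * cEl k R = 1 ∧ cEl k R * dEl k R = 1 ∧
    ∀ r, r * dEl k R = dEl k R * r := (exists_inv k R).choose_spec

noncomputable def cF (i : Fin (finrank k R)) : R := yB k R i * dEl k R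

lemma K1 : ∑ i, bB k R i * cF k R i = 1 := by
  simp only [cF, ← mul_assoc, ← Finset.sum_mul]
  rw [← cEl, (dEl_spec k R).2.1]

lemma K2 (r : R) :
    ∑ i, (r * bB k R i) ⊗ₜ[k] cF k R i = ∑ i, bB k R i ⊗ₜ[k] (cF k R i * r) := by
  have h := congrArg (LinearMap.lTensor R (LinearMap.mulRight k (dEl k R))) (casimir (k := k) (R := R) r)
  simp only [map_sum, LinearMap.lTensor_tmul, LinearMap.mulRight_apply] at h
  have e : ∀ i, yB k R i * r * dEl k R = cF k R i * r := by
    intro i; rw [cF, mul_assoc, mul_assoc, ← (dEl_spec k R).2.2 r]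
  simp only [e] at h
  exact h
end CF

section ASide
variable (k R A : Type*) [Field k] [CharZero k]
    [Ring R] [Algebra k R] [FiniteDimensional k R] [IsSemisimpleRing R]
    [Ring A] [Algebra k A] (f : R →ₐ[k] A)

/-- The separability element transported to `Aᵉ`. -/
noncomputable def EE : A ⊗[k] Aᵐᵒᵖ :=
  ∑ i, f (bB k R i) ⊗ₜ[k] op (f (cF k R i))

variable {k R A}

lemma muE_mul_EE (x : A ⊗[k] Aᵐᵒᵖ) : muE k A (x * EE k R A f) = muE k A x := by
  induction x using TensorProduct.induction_on with
  | zero => simp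
  | add u v hu hv => rw [add_mul, map_add, hu, hv, map_add]
  | tmul a b =>
    rw [EE, Finset.mul_sum, map_sum]
    simp only [Algebra.TensorProduct.tmul_mul_tmul, muE_tmul, unop_mul, unop_op]
    have e : ∀ i, a * f (bB k R i) * (f (cF k R i) * b.unop)
        = a * f (bB k R i * cF k R i) * b.unop := by
      intro i; simp only [map_mul, mul_assoc]
    simp only [e]
    have h2 : ∑ i, a * f (bB k R i * cF k R i) * b.unop
        = a * f (∑ i, bB k R i * cF k R i) * b.unop := by
      rw [map_sum, Finset.mul_sum, Finset.sum_mul]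
    rw [h2, K1, map_one, mul_one]

lemma gen_mul_EE (r : R) :
    (f r ⊗ₜ[k] (1 : Aᵐᵒᵖ) - (1 : A) ⊗ₜ[k] op (f r)) * EE k R A f = 0 := by
  rw [sub_mul, sub_eq_zero, EE, Finset.mul_sum, Finset.mul_sum]
  have h := congrArg (TensorProduct.map f.toLinearMap
    (((opLinearEquiv k (M := A)).toLinearMap) ∘ₗ f.toLinearMap)) (K2 (k := k) (R := R) r)
  simp only [map_sum, TensorProduct.map_tmul, LinearMap.coe_comp, Function.comp_apply,
    AlgHom.toLinearMap_apply, LinearEquiv.coe_coe, coe_opLinearEquiv] at h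
  simp only [Algebra.TensorProduct.tmul_mul_tmul, one_mul, mul_one, ← op_mul, ← map_mul]
  exact h

lemma sub_mul_EE_mem (x : A ⊗[k] Aᵐᵒᵖ) : x - x * EE k R A f ∈ relJ k f := by
  induction x using TensorProduct.induction_on with
  | zero => simp
  | add u v hu hv =>
    have e : u + v - (u + v) * EE k R A f
        = (u - u * EE k R A f) + (v - v * EE k R A f) := by rw [add_mul]; abel
    rw [e]; exact Submodule.add_mem _ hu hv
  | tmul a b =>
    have e1 : ∑ i, (a * f (bB k R i) * f (cF k R i)) ⊗ₜ[k] b = a ⊗ₜ[k] b := by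
      rw [← TensorProduct.sum_tmul]
      congr 1
      simp only [mul_assoc, ← map_mul]
      rw [← Finset.mul_sum, ← map_sum, K1, map_one, mul_one]
    have e2 : (a ⊗ₜ[k] b) * EE k R A f
        = ∑ i, (a * f (bB k R i)) ⊗ₜ[k] (b * op (f (cF k R i))) := by
      rw [EE, Finset.mul_sum]
      simp only [Algebra.TensorProduct.tmul_mul_tmul]
    have e0 : a ⊗ₜ[k] b - (a ⊗ₜ[k] b) * EE k R A f
        = ∑ i, ((a * f (bB k R i) * f (cF k R i)) ⊗ₜ[k] b
            - (a * f (bB k R i)) ⊗ₜ[k] (b * op (f (cF k R i)))) := by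
      conv_lhs => rw [e2, ← e1]
      rw [← Finset.sum_sub_distrib]
    rw [e0]
    apply Submodule.sum_mem
    intro i _
    have hg : (f (cF k R i) ⊗ₜ[k] (1:Aᵐᵒᵖ) - (1:A) ⊗ₜ[k] op (f (cF k R i))) ∈ relJ k f :=
      Submodule.subset_span ⟨cF k R i, rfl⟩
    have hs := Submodule.smul_mem (relJ k f) ((a * f (bB k R i)) ⊗ₜ[k] b) hg
    have e3 : ((a * f (bB k R i)) ⊗ₜ[k] b : A ⊗[k] Aᵐᵒᵖ)
          • (f (cF k R i) ⊗ₜ[k] (1:Aᵐᵒᵖ) - (1:A) ⊗ₜ[k] op (f (cF k R i)))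
        = (a * f (bB k R i) * f (cF k R i)) ⊗ₜ[k] b
          - (a * f (bB k R i)) ⊗ₜ[k] (b * op (f (cF k R i))) := by
      rw [smul_eq_mul, mul_sub]
      simp only [Algebra.TensorProduct.tmul_mul_tmul, mul_one]
    rwa [e3] at hs
end ASide

/-- Let `R` be a finite-dimensional semisimple `k`-algebra (char `k = 0`)
and `A` an `R`-algebra that is smooth over `k`, i.e. finitely generated with `Ω¹A`
projective as an `A`-bimodule.  Then `A` is smooth over `R`: `Ω¹_R A` is projective
as an `A`-bimodule (module over `Aᵉ = A ⊗ Aᵒᵖ`). -/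
theorem stmt3 (k R A : Type*) [Field k] [CharZero k]
    [Ring R] [Algebra k R] [FiniteDimensional k R] [IsSemisimpleRing R]
    [Ring A] [Algebra k A] (f : R →ₐ[k] A) (hf : Function.Injective f)
    (hfg : ∃ s : Finset A, Algebra.adjoin k (s : Set A) = ⊤)
    (hproj : Module.Projective (A ⊗[k] Aᵐᵒᵖ) (kerMu k A)) :
    Module.Projective (A ⊗[k] Aᵐᵒᵖ) ((kerMu k A).map (relJ k f).mkQ) := by
  classical
  -- the right-multiplication-by-`EE` map, as an `Aᵉ`-linear endomorphism
  set Ae := A ⊗[k] Aᵐᵒᵖ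
  let φ : Ae →ₗ[Ae] Ae := LinearMap.toSpanSingleton Ae Ae (EE k R A f)
  have φ_apply : ∀ x : Ae, φ x = x * EE k R A f := fun x => rfl
  have hker : relJ k f ≤ LinearMap.ker φ := by
    intro x hx
    rw [LinearMap.mem_ker, φ_apply]
    induction hx using Submodule.span_induction with
    | mem g hg => obtain ⟨r, rfl⟩ := hg; exact gen_mul_EE f r
    | zero => simp
    | add u v _ _ hu hv => rw [add_mul, hu, hv, add_zero]
    | smul z u _ hu => rw [smul_eq_mul, mul_assoc, hu, mul_zero]
  let Φ : (Ae ⧸ relJ k f) →ₗ[Ae] Ae := (relJ k f).liftQ φ hker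
  have Φ_mk : ∀ x : Ae, Φ ((relJ k f).mkQ x) = x * EE k R A f := fun x => rfl
  -- the two maps
  have hmem : ∀ y ∈ (kerMu k A).map (relJ k f).mkQ, Φ y ∈ kerMu k A := by
    rintro y ⟨x, hx, rfl⟩
    show muE k A (Φ ((relJ k f).mkQ x)) = 0
    rw [Φ_mk, muE_mul_EE]
    exact hx
  let s : ((kerMu k A).map (relJ k f).mkQ) →ₗ[Ae] kerMu k A := Φ.restrict hmem
  let p : kerMu k A →ₗ[Ae] ((kerMu k A).map (relJ k f).mkQ) :=
    ((relJ k f).mkQ).restrict (fun x hx => Submodule.mem_map_of_mem hx)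
  haveI := hproj
  apply Module.Projective.of_split s p
  ext ⟨y, hy⟩
  obtain ⟨x, hx, rfl⟩ := hy
  show (relJ k f).mkQ (Φ ((relJ k f).mkQ x)) = (relJ k f).mkQ x
  rw [Φ_mk, Submodule.mkQ_apply, Submodule.mkQ_apply, Submodule.Quotient.eq]
  rw [show x * EE k R A f - x = -(x - x * EE k R A f) from (neg_sub _ _).symm]
  exact Submodule.neg_mem _ (sub_mul_EE_mem f x)
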